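/- Let A_1, A_2 > 0 and take (d_1,d_2) = (5,5), n = 10. On ℝ²×ℝ² define v(q) := e^{(5q_1 + 5q_2)/2}, J(p) := (1/9)(p_1+p_2)² − (p_1² + p_2²)/5, S(q) := A_1 e^{−q_1} + A_2 e^{−q_2}, the Ricci-flat Hamiltonian H(q,p) := v(q)^{-1}J(p) − S(q)v(q), and F(q,p) := −(1/45)(p_1 − 2p_2)² e^{−2q_1 − 4q_2} + A_1 e^{2q_1 + q_2}. Then F is a generalized first integral of H: there exists a smooth function φ on ℝ²×ℝ² such that {F,H} = φ·H identically; in particular {F,H}(q,p) = 0 at every point (q,p) with H(q,p) = 0. -/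

import Mathlib

/-- Partial derivative in the `i`-th `q`-coordinate. -/
noncomputable def pderivQ (F : (Fin 2 → ℝ) → (Fin 2 → ℝ) → ℝ) (i : Fin 2)
    (q p : Fin 2 → ℝ) : ℝ :=
  deriv (fun t => F (Function.update q i t) p) (q i)

/-- Partial derivative in the `i`-th `p`-coordinate. -/
noncomputable def pderivP (F : (Fin 2 → ℝ) → (Fin 2 → ℝ) → ℝ) (i : Fin 2)
    (q p : Fin 2 → ℝ) : ℝ :=
  deriv (fun t => F q (Function.update p i t)) (p i)

/-- Canonical Poisson bracket on `ℝ² × ℝ²`. -/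
noncomputable def poisson (F G : (Fin 2 → ℝ) → (Fin 2 → ℝ) → ℝ) (q p : Fin 2 → ℝ) : ℝ :=
  ∑ i : Fin 2, (pderivQ F i q p * pderivP G i q p - pderivP F i q p * pderivQ G i q p)

/-- The Ricci-flat Hamiltonian for `(d₁,d₂) = (5,5)`, `n = 10`:
`v(q) = e^{(5q₁+5q₂)/2}`, `J(p) = (p₁+p₂)²/9 − (p₁²+p₂²)/5`,
`S(q) = A₁e^{−q₁} + A₂e^{−q₂}`, `H = v⁻¹J − Sv`. -/
noncomputable def Ham (A1 A2 : ℝ) (q p : Fin 2 → ℝ) : ℝ :=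
  (Real.exp ((5 * q 0 + 5 * q 1) / 2))⁻¹ *
      ((1 / 9) * (p 0 + p 1) ^ 2 - ((p 0) ^ 2 + (p 1) ^ 2) / 5) -
    (A1 * Real.exp (-(q 0)) + A2 * Real.exp (-(q 1))) * Real.exp ((5 * q 0 + 5 * q 1) / 2)

/-- The Dancer–Wang generalized first integral for `(d₁,d₂) = (5,5)`. -/
noncomputable def Fint (A1 : ℝ) (q p : Fin 2 → ℝ) : ℝ :=
  -(1 / 45) * (p 0 - 2 * p 1) ^ 2 * Real.exp (-2 * q 0 - 4 * q 1) +
    A1 * Real.exp (2 * q 0 + q 1)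

private lemma HasDerivAt.congr_fun' {f g : ℝ → ℝ} {f' x : ℝ} (h : HasDerivAt f f' x)
    (hfg : ∀ t, g t = f t) : HasDerivAt g f' x :=
  h.congr_of_eventuallyEq (Filter.Eventually.of_forall hfg)

private lemma hasDerivAt_lin (a b x : ℝ) : HasDerivAt (fun t : ℝ => a * t + b) a x := by
  simpa using ((hasDerivAt_id x).const_mul a).add_const b

private lemma hd_exp_lin (a b x : ℝ) :
    HasDerivAt (fun t : ℝ => Real.exp (a * t + b)) (a * Real.exp (a * x + b)) x := by
  simpa [mul_comm] using (hasDerivAt_lin a b x).exp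

-- partial derivatives of Fint
private lemma dQF0 (A1 : ℝ) (q p : Fin 2 → ℝ) :
    pderivQ (Fint A1) 0 q p =
      (2 / 45) * (p 0 - 2 * p 1) ^ 2 * Real.exp (-2 * q 0 - 4 * q 1) +
        2 * A1 * Real.exp (2 * q 0 + q 1) := by
  unfold pderivQ
  have h1 := (hd_exp_lin (-2) (-4 * q 1) (q 0)).const_mul (-(1 / 45) * (p 0 - 2 * p 1) ^ 2)
  have h2 := (hd_exp_lin 2 (q 1) (q 0)).const_mul A1
  have h := (h1.add h2).congr_fun' (f := fun t =>
      -(1 / 45) * (p 0 - 2 * p 1) ^ 2 * Real.exp (-2 * t + -4 * q 1) +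
        A1 * Real.exp (2 * t + q 1))
    (g := fun t => Fint A1 (Function.update q 0 t) p)
    (fun t => by simp only [Fint, Function.update_apply, Fin.reduceEq, if_true, if_false, reduceIte]; try ring_nf)
  rw [h.deriv]; push_cast; ring_nf
private lemma dQF1 (A1 : ℝ) (q p : Fin 2 → ℝ) :
    pderivQ (Fint A1) 1 q p =
      (4 / 45) * (p 0 - 2 * p 1) ^ 2 * Real.exp (-2 * q 0 - 4 * q 1) +
        A1 * Real.exp (2 * q 0 + q 1) := by
  unfold pderivQ
  have h1 := (hd_exp_lin (-4) (-2 * q 0) (q 1)).const_mul (-(1 / 45) * (p 0 - 2 * p 1) ^ 2)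
  have h2 := (hd_exp_lin 1 (2 * q 0) (q 1)).const_mul A1
  have h := (h1.add h2).congr_fun' (g := fun t => Fint A1 (Function.update q 1 t) p)
    (fun t => by simp only [Fint, Function.update_apply, Fin.reduceEq, if_true, if_false, reduceIte, Pi.add_apply, Pi.sub_apply, Pi.mul_apply, Pi.pow_apply]; try ring_nf)
  rw [h.deriv]; push_cast; ring_nf
private lemma dPF0 (A1 : ℝ) (q p : Fin 2 → ℝ) :
    pderivP (Fint A1) 0 q p =
      -(2 / 45) * (p 0 - 2 * p 1) * Real.exp (-2 * q 0 - 4 * q 1) := by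
  unfold pderivP
  have h1 := ((((hasDerivAt_id' (x := p 0)).sub_const (2 * p 1)).pow 2).const_mul
      (-(1 / 45) : ℝ)).mul_const (Real.exp (-2 * q 0 - 4 * q 1)) |>.add_const
      (A1 * Real.exp (2 * q 0 + q 1))
  have h := h1.congr_fun' (g := fun t => Fint A1 q (Function.update p 0 t))
    (fun t => by simp only [Fint, Function.update_apply, Fin.reduceEq, if_true, if_false, reduceIte, Pi.add_apply, Pi.sub_apply, Pi.mul_apply, Pi.pow_apply]; try ring_nf)
  rw [h.deriv]; push_cast; ring_nf
private lemma dPF1 (A1 : ℝ) (q p : Fin 2 → ℝ) :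
    pderivP (Fint A1) 1 q p =
      (4 / 45) * (p 0 - 2 * p 1) * Real.exp (-2 * q 0 - 4 * q 1) := by
  unfold pderivP
  have h1 := (((((hasDerivAt_id' (x := p 1)).const_mul (-2 : ℝ)).add_const (p 0)).pow 2).const_mul
      (-(1 / 45) : ℝ)).mul_const (Real.exp (-2 * q 0 - 4 * q 1)) |>.add_const
      (A1 * Real.exp (2 * q 0 + q 1))
  have h := h1.congr_fun' (g := fun t => Fint A1 q (Function.update p 1 t))
    (fun t => by simp only [Fint, Function.update_apply, Fin.reduceEq, if_true, if_false, reduceIte, Pi.add_apply, Pi.sub_apply, Pi.mul_apply, Pi.pow_apply]; try ring_nf)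
  rw [h.deriv]; push_cast; ring_nf

-- partial derivatives of Ham
private lemma dQH0 (A1 A2 : ℝ) (q p : Fin 2 → ℝ) :
    pderivQ (Ham A1 A2) 0 q p =
      -(5 / 2) * Real.exp (-(5 / 2) * q 0 + -(5 / 2) * q 1) *
          ((1 / 9) * (p 0 + p 1) ^ 2 - ((p 0) ^ 2 + (p 1) ^ 2) / 5) +
        A1 * Real.exp (-(q 0)) * Real.exp ((5 * q 0 + 5 * q 1) / 2) -
        (5 / 2) * (A1 * Real.exp (-(q 0)) + A2 * Real.exp (-(q 1))) *
          Real.exp ((5 * q 0 + 5 * q 1) / 2) := by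
  unfold pderivQ
  have h1 := (hd_exp_lin (-(5 / 2)) (-(5 / 2) * q 1) (q 0)).mul_const
      ((1 / 9) * (p 0 + p 1) ^ 2 - ((p 0) ^ 2 + (p 1) ^ 2) / 5)
  have h2 := (((hd_exp_lin (-1) 0 (q 0)).const_mul A1).add_const
      (A2 * Real.exp (-(q 1)))).mul (hd_exp_lin (5 / 2) ((5 / 2) * q 1) (q 0))
  have h := (h1.sub h2).congr_fun' (g := fun t => Ham A1 A2 (Function.update q 0 t) p)
    (fun t => by
      simp only [Ham, Function.update_apply, Fin.reduceEq, if_true, if_false, reduceIte, Pi.add_apply, Pi.sub_apply, Pi.mul_apply, Pi.pow_apply]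
      rw [← Real.exp_neg]
      ring_nf)
  rw [h.deriv]
  rw [show (-1 : ℝ) * q 0 + 0 = -(q 0) by ring,
    show (5 / 2 : ℝ) * q 0 + 5 / 2 * q 1 = (5 * q 0 + 5 * q 1) / 2 by ring]
  ring_nf
private lemma dQH1 (A1 A2 : ℝ) (q p : Fin 2 → ℝ) :
    pderivQ (Ham A1 A2) 1 q p =
      -(5 / 2) * Real.exp (-(5 / 2) * q 0 + -(5 / 2) * q 1) *
          ((1 / 9) * (p 0 + p 1) ^ 2 - ((p 0) ^ 2 + (p 1) ^ 2) / 5) +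
        A2 * Real.exp (-(q 1)) * Real.exp ((5 * q 0 + 5 * q 1) / 2) -
        (5 / 2) * (A1 * Real.exp (-(q 0)) + A2 * Real.exp (-(q 1))) *
          Real.exp ((5 * q 0 + 5 * q 1) / 2) := by
  unfold pderivQ
  have h1 := (hd_exp_lin (-(5 / 2)) (-(5 / 2) * q 0) (q 1)).mul_const
      ((1 / 9) * (p 0 + p 1) ^ 2 - ((p 0) ^ 2 + (p 1) ^ 2) / 5)
  have h2 := (((hd_exp_lin (-1) 0 (q 1)).const_mul A2).add_const
      (A1 * Real.exp (-(q 0)))).mul (hd_exp_lin (5 / 2) ((5 / 2) * q 0) (q 1))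
  have h := (h1.sub h2).congr_fun' (g := fun t => Ham A1 A2 (Function.update q 1 t) p)
    (fun t => by
      simp only [Ham, Function.update_apply, Fin.reduceEq, if_true, if_false, reduceIte, Pi.add_apply, Pi.sub_apply, Pi.mul_apply, Pi.pow_apply]
      rw [← Real.exp_neg]
      ring_nf)
  rw [h.deriv]
  rw [show (-1 : ℝ) * q 1 + 0 = -(q 1) by ring,
    show (5 / 2 : ℝ) * q 1 + 5 / 2 * q 0 = (5 * q 0 + 5 * q 1) / 2 by ring]
  ring_nf
private lemma dPH0 (A1 A2 : ℝ) (q p : Fin 2 → ℝ) :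
    pderivP (Ham A1 A2) 0 q p =
      (Real.exp ((5 * q 0 + 5 * q 1) / 2))⁻¹ * ((2 / 9) * (p 0 + p 1) - (2 / 5) * p 0) := by
  unfold pderivP
  have h1 := ((((hasDerivAt_id' (x := p 0)).add_const (p 1)).pow 2).const_mul (1 / 9 : ℝ)).sub
      ((((hasDerivAt_id' (x := p 0)).pow 2).add_const ((p 1) ^ 2)).div_const 5)
  have h2 := (h1.const_mul ((Real.exp ((5 * q 0 + 5 * q 1) / 2))⁻¹)).sub_const
      ((A1 * Real.exp (-(q 0)) + A2 * Real.exp (-(q 1))) * Real.exp ((5 * q 0 + 5 * q 1) / 2))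
  have h := h2.congr_fun' (g := fun t => Ham A1 A2 q (Function.update p 0 t))
    (fun t => by simp only [Ham, Function.update_apply, Fin.reduceEq, if_true, if_false, reduceIte, Pi.add_apply, Pi.sub_apply, Pi.mul_apply, Pi.pow_apply]; try ring_nf)
  rw [h.deriv]; push_cast; ring_nf
private lemma dPH1 (A1 A2 : ℝ) (q p : Fin 2 → ℝ) :
    pderivP (Ham A1 A2) 1 q p =
      (Real.exp ((5 * q 0 + 5 * q 1) / 2))⁻¹ * ((2 / 9) * (p 0 + p 1) - (2 / 5) * p 1) := by
  unfold pderivP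
  have h1 := ((((hasDerivAt_id' (x := p 1)).add_const (p 0)).pow 2).const_mul (1 / 9 : ℝ)).sub
      ((((hasDerivAt_id' (x := p 1)).pow 2).add_const ((p 0) ^ 2)).div_const 5)
  have h2 := (h1.const_mul ((Real.exp ((5 * q 0 + 5 * q 1) / 2))⁻¹)).sub_const
      ((A1 * Real.exp (-(q 0)) + A2 * Real.exp (-(q 1))) * Real.exp ((5 * q 0 + 5 * q 1) / 2))
  have h := h2.congr_fun' (g := fun t => Ham A1 A2 q (Function.update p 1 t))
    (fun t => by simp only [Ham, Function.update_apply, Fin.reduceEq, if_true, if_false, reduceIte, Pi.add_apply, Pi.sub_apply, Pi.mul_apply, Pi.pow_apply]; try ring_nf)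
  rw [h.deriv]; push_cast; ring_nf

private lemma key (A1 A2 : ℝ) (q p : Fin 2 → ℝ) :
    poisson (Fint A1) (Ham A1 A2) q p =
      (-(1 / 45) * (p 0 - 2 * p 1) * Real.exp (-2 * q 0 - 4 * q 1)) * Ham A1 A2 q p := by
  unfold poisson
  rw [Fin.sum_univ_two, dQF0, dQF1, dPF0, dPF1, dQH0, dQH1, dPH0, dPH1]
  unfold Ham
  set X := Real.exp (q 0 / 2) with hXdef
  set Y := Real.exp (q 1 / 2) with hYdef
  have hX : X ≠ 0 := Real.exp_ne_zero _
  have hY : Y ≠ 0 := Real.exp_ne_zero _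
  have hV : Real.exp ((5 * q 0 + 5 * q 1) / 2) = X ^ 5 * Y ^ 5 := by
    rw [show (5 * q 0 + 5 * q 1) / 2 = (5 : ℕ) * (q 0 / 2) + (5 : ℕ) * (q 1 / 2) by push_cast; ring,
      Real.exp_add, Real.exp_nat_mul, Real.exp_nat_mul]
  have hN : Real.exp (-(5 / 2) * q 0 + -(5 / 2) * q 1) = (X ^ 5 * Y ^ 5)⁻¹ := by
    rw [show -(5 / 2 : ℝ) * q 0 + -(5 / 2) * q 1 = -((5 * q 0 + 5 * q 1) / 2) by ring,
      Real.exp_neg, hV]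
  have h0 : Real.exp (-(q 0)) = (X ^ 2)⁻¹ := by
    rw [show -(q 0) = -((2 : ℕ) * (q 0 / 2)) by push_cast; ring, Real.exp_neg, Real.exp_nat_mul]
  have h1 : Real.exp (-(q 1)) = (Y ^ 2)⁻¹ := by
    rw [show -(q 1) = -((2 : ℕ) * (q 1 / 2)) by push_cast; ring, Real.exp_neg, Real.exp_nat_mul]
  have hE : Real.exp (-2 * q 0 - 4 * q 1) = (X ^ 4 * Y ^ 8)⁻¹ := by
    rw [show -2 * q 0 - 4 * q 1 = -((4 : ℕ) * (q 0 / 2) + (8 : ℕ) * (q 1 / 2)) by push_cast; ring,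
      Real.exp_neg, Real.exp_add, Real.exp_nat_mul, Real.exp_nat_mul]
  have hG : Real.exp (2 * q 0 + q 1) = X ^ 4 * Y ^ 2 := by
    rw [show 2 * q 0 + q 1 = (4 : ℕ) * (q 0 / 2) + (2 : ℕ) * (q 1 / 2) by push_cast; ring,
      Real.exp_add, Real.exp_nat_mul, Real.exp_nat_mul]
  rw [hV, hN, h0, h1, hE, hG]
  field_simp
  ring

/-- `F` is a generalized first integral of `H`: `{F,H} = φ·H` for a smooth `φ`;
in particular `{F,H}` vanishes on the zero set of `H`. -/
theorem five_five_generalized_first_integral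
    (A1 A2 : ℝ) (hA1 : 0 < A1) (hA2 : 0 < A2) :
    (∃ φ : ((Fin 2 → ℝ) × (Fin 2 → ℝ)) → ℝ, ContDiff ℝ (⊤ : ℕ∞) φ ∧
      ∀ q p : Fin 2 → ℝ,
        poisson (Fint A1) (Ham A1 A2) q p = φ (q, p) * Ham A1 A2 q p) ∧
    (∀ q p : Fin 2 → ℝ, Ham A1 A2 q p = 0 → poisson (Fint A1) (Ham A1 A2) q p = 0) := by
  constructor
  · refine ⟨fun z => -(1 / 45) * (z.2 0 - 2 * z.2 1) * Real.exp (-2 * z.1 0 - 4 * z.1 1),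
      ?_, fun q p => key A1 A2 q p⟩
    fun_prop
  · intro q p hH
    rw [key A1 A2 q p, hH, mul_zero]
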